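/- Let a_1, …, a_m ∈ 𝔽₂ⁿ be nonzero and linearly independent over 𝔽₂, and let g : 𝔽₂ⁿ → ℝ be supported on {a_1,…,a_m} with |g(a_i)| ≥ 1 for all i. Then ‖g‖_A ≥ √(m/3). -/
import Mathlib


open scoped Classical
open Finset

noncomputable def ft {n : ℕ} (f : (Fin n → ZMod 2) → ℝ) (r : Fin n → ZMod 2) : ℝ :=
  (∑ x : Fin n → ZMod 2, f x * (-1 : ℝ) ^ (∑ i, r i * x i).val) /
    (Fintype.card (Fin n → ZMod 2))

noncomputable def aNorm {n : ℕ} (f : (Fin n → ZMod 2) → ℝ) : ℝ := ∑ r : Fin n → ZMod 2, |ft f r|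

noncomputable def chi {n : ℕ} (r x : Fin n → ZMod 2) : ℝ := (-1) ^ (∑ i, r i * x i).val

lemma npv_add (a b : ZMod 2) : ((-1:ℝ)) ^ (a + b).val = (-1:ℝ) ^ a.val * (-1:ℝ) ^ b.val := by
  have h : ∀ c : ZMod 2, c = 0 ∨ c = 1 := by decide
  rcases h a with ha | ha <;> rcases h b with hb | hb <;> subst ha <;> subst hb <;>
    norm_num [show ZMod.val (2:ZMod 2) = 0 by decide, show ZMod.val (1:ZMod 2) = 1 by decide]

lemma chi_mul_chi {n : ℕ} (r x y : Fin n → ZMod 2) : chi r x * chi r y = chi r (x + y) := by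
  unfold chi
  rw [← npv_add]
  congr 2
  rw [← Finset.sum_add_distrib]
  exact Finset.sum_congr rfl fun i _ => by simp [mul_add]

lemma chi_add_left {n : ℕ} (r s x : Fin n → ZMod 2) : chi (r + s) x = chi r x * chi s x := by
  unfold chi
  rw [← npv_add]
  congr 2
  rw [← Finset.sum_add_distrib]
  exact Finset.sum_congr rfl fun i _ => by simp [add_mul]

lemma sum_chi {n : ℕ} (v : Fin n → ZMod 2) :
    ∑ r : Fin n → ZMod 2, chi r v
      = if v = 0 then (Fintype.card (Fin n → ZMod 2) : ℝ) else 0 := by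
  split_ifs with h
  · subst h; simp [chi, Finset.card_univ]
  · obtain ⟨j, hj⟩ : ∃ j, v j ≠ 0 := by
      by_contra hc; push_neg at hc; exact h (funext hc)
    have hj1 : v j = 1 := by
      rcases (by decide : ∀ c : ZMod 2, c = 0 ∨ c = 1) (v j) with h' | h'
      · exact absurd h' hj
      · exact h'
    set d : Fin n → ZMod 2 := Pi.single j 1 with hd
    have key : ∑ r : Fin n → ZMod 2, chi r v = ∑ r : Fin n → ZMod 2, chi (r + d) v :=
      (Fintype.sum_equiv (Equiv.addRight d) (fun r => chi (r + d) v) (fun r => chi r v)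
        (fun r => rfl)).symm
    have hcd : chi d v = -1 := by
      unfold chi
      have hsum : (∑ i, d i * v i) = v j := by
        rw [hd]; simp [Pi.single_apply, ite_mul]
      rw [hsum, hj1]
      norm_num [ZMod.val_one]
    have hneg : ∑ r : Fin n → ZMod 2, chi r v = - ∑ r : Fin n → ZMod 2, chi r v := by
      nth_rewrite 1 [key]
      simp only [chi_add_left, hcd, mul_neg_one]
      rw [Finset.sum_neg_distrib]
    linarith

lemma pairing {n m : ℕ} {a : Fin m → (Fin n → ZMod 2)}
    (hind : LinearIndependent (ZMod 2) a) {i1 i2 i3 i4 : Fin m}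
    (h : a i1 + a i2 + a i3 + a i4 = 0) :
    (i1 = i2 ∧ i3 = i4) ∨ (i1 = i3 ∧ i2 = i4) ∨ (i1 = i4 ∧ i2 = i3) := by
  have hinj := hind.injective
  have hadd : ∀ x : Fin n → ZMod 2, x + x = 0 := by
    intro x; funext j
    exact (by decide : ∀ c : ZMod 2, c + c = 0) (x j)
  have cancel : ∀ x y : Fin n → ZMod 2, x + y = 0 → x = y := by
    intro x y hxy; funext j
    have hcomp : x j + y j = 0 := by
      have := congrFun hxy j; simpa using this
    revert hcomp
    exact (by decide : ∀ c d : ZMod 2, c + d = 0 → c = d) (x j) (y j)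
  have hc : i1 = i2 ∨ i1 = i3 ∨ i1 = i4 := by
    by_contra hcon
    push_neg at hcon
    obtain ⟨h12, h13, h14⟩ := hcon
    set c : Fin m → ZMod 2 := fun i =>
      (if i = i1 then 1 else 0) + (if i = i2 then 1 else 0) + (if i = i3 then 1 else 0)
        + (if i = i4 then 1 else 0) with hcdef
    have hsum : ∑ i, c i • a i = a i1 + a i2 + a i3 + a i4 := by
      simp only [hcdef, add_smul, Finset.sum_add_distrib, ite_smul, zero_smul, one_smul]
      simp [Finset.sum_ite_eq']
    have hz := Fintype.linearIndependent_iff.1 hind c (by rw [hsum, h]) i1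
    simp only [hcdef] at hz
    simp [h12, h13, h14] at hz
  rcases hc with h1 | h1 | h1
  · subst h1
    have h' : a i3 + a i4 = 0 := by
      rw [show a i1 + a i1 + a i3 + a i4 = (a i1 + a i1) + (a i3 + a i4) by ring, hadd,
        zero_add] at h
      exact h
    exact Or.inl ⟨rfl, hinj (cancel _ _ h')⟩
  · subst h1
    have h' : a i2 + a i4 = 0 := by
      rw [show a i1 + a i2 + a i1 + a i4 = (a i1 + a i1) + (a i2 + a i4) by ring, hadd,
        zero_add] at h
      exact h
    exact Or.inr (Or.inl ⟨rfl, hinj (cancel _ _ h')⟩)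
  · subst h1
    have h' : a i2 + a i3 = 0 := by
      rw [show a i1 + a i2 + a i3 + a i1 = (a i1 + a i1) + (a i2 + a i3) by ring, hadd,
        zero_add] at h
      exact h
    exact Or.inr (Or.inr ⟨rfl, hinj (cancel _ _ h')⟩)

-- generic expansion of a squared chi-sum
lemma sq_sum_chi {n : ℕ} {ι : Type*} [Fintype ι] (c : ι → ℝ) (v : ι → (Fin n → ZMod 2))
    (r : Fin n → ZMod 2) :
    (∑ i, c i * chi r (v i)) ^ 2 = ∑ i, ∑ j, (c i * c j) * chi r (v i + v j) := by
  rw [sq, Finset.sum_mul_sum]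
  refine Finset.sum_congr rfl fun i _ => Finset.sum_congr rfl fun j _ => ?_
  rw [← chi_mul_chi]; ring

-- interchange: sum over r of a chi-sum indexed by ι
lemma sum_r_sum {n : ℕ} {ι : Type*} [Fintype ι] (c : ι → ℝ) (v : ι → (Fin n → ZMod 2)) :
    ∑ r : Fin n → ZMod 2, ∑ i, c i * chi r (v i)
      = ∑ i, c i * (if v i = 0 then (Fintype.card (Fin n → ZMod 2) : ℝ) else 0) := by
  rw [Finset.sum_comm]
  exact Finset.sum_congr rfl fun i _ => by rw [← Finset.mul_sum, sum_chi]

lemma key_expand {n : ℕ} {ι : Type*} [Fintype ι] (c : ι → ℝ) (v : ι → (Fin n → ZMod 2)) :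
    ∑ r : Fin n → ZMod 2, (∑ i, c i * chi r (v i)) ^ 2
      = ∑ i, ∑ j, (c i * c j) *
          (if v i + v j = 0 then (Fintype.card (Fin n → ZMod 2) : ℝ) else 0) := by
  rw [show ∑ r : Fin n → ZMod 2, (∑ i, c i * chi r (v i)) ^ 2
      = ∑ r : Fin n → ZMod 2, ∑ p : ι × ι, (c p.1 * c p.2) * chi r (v p.1 + v p.2) from
    Finset.sum_congr rfl fun r _ => by
      rw [sq_sum_chi]
      exact (Fintype.sum_prod_type
        (f := fun p : ι × ι => (c p.1 * c p.2) * chi r (v p.1 + v p.2))).symm]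
  rw [sum_r_sum (ι := ι × ι) (fun p => c p.1 * c p.2) (fun p => v p.1 + v p.2)]
  exact Fintype.sum_prod_type
    (f := fun p : ι × ι => (c p.1 * c p.2) *
      (if v p.1 + v p.2 = 0 then (Fintype.card (Fin n → ZMod 2) : ℝ) else 0))

lemma ite_le_three {c P Q R : Prop} [Decidable c] [Decidable P] [Decidable Q] [Decidable R]
    (x : ℝ) (hx : 0 ≤ x) (h : c → P ∨ Q ∨ R) :
    (if c then x else 0) ≤ (if P then x else 0) + (if Q then x else 0) + (if R then x else 0) := by
  have hP : (0:ℝ) ≤ if P then x else 0 := by split_ifs <;> simp [hx]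
  have hQ : (0:ℝ) ≤ if Q then x else 0 := by split_ifs <;> simp [hx]
  have hR : (0:ℝ) ≤ if R then x else 0 := by split_ifs <;> simp [hx]
  by_cases hc : c
  · rcases h hc with h1 | h1 | h1
    · simp only [if_pos hc, if_pos h1]; linarith
    · simp only [if_pos hc, if_pos h1]; linarith
    · simp only [if_pos hc, if_pos h1]; linarith
  · simp only [if_neg hc]; linarith

lemma pi_add_self {n : ℕ} (x : Fin n → ZMod 2) : x + x = 0 := by
  funext j
  exact (by decide : ∀ c : ZMod 2, c + c = 0) (x j)

lemma pi_add_eq_zero {n : ℕ} {x y : Fin n → ZMod 2} : x + y = 0 ↔ x = y := by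
  constructor
  · intro hxy
    funext j
    have hcomp : x j + y j = 0 := by have := congrFun hxy j; simpa using this
    revert hcomp
    exact (by decide : ∀ c d : ZMod 2, c + d = 0 → c = d) (x j) (y j)
  · rintro rfl; exact pi_add_self x

theorem independent_support_large_aNorm {n m : ℕ} (a : Fin m → (Fin n → ZMod 2))
    (hne : ∀ i, a i ≠ 0) (hind : LinearIndependent (ZMod 2) a)
    (g : (Fin n → ZMod 2) → ℝ)
    (hsupp : ∀ x, x ∉ Set.range a → g x = 0)
    (hbig : ∀ i, 1 ≤ |g (a i)|) :
    Real.sqrt (m / 3) ≤ aNorm g := by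
  have hA0 : 0 ≤ aNorm g := Finset.sum_nonneg fun r _ => abs_nonneg _
  rcases Nat.eq_zero_or_pos m with hm | hm
  · subst hm
    simpa using hA0
  have hinj := hind.injective
  set N : ℝ := (Fintype.card (Fin n → ZMod 2) : ℝ) with hNdef
  have hNpos : 0 < N := by
    rw [hNdef]; exact_mod_cast Fintype.card_pos
  -- ft formula
  have hft : ∀ r, ft g r = (∑ i, g (a i) * chi r (a i)) / N := by
    intro r
    have h1 : ∑ x ∈ Finset.univ.image a, g x * chi r x
        = ∑ x : Fin n → ZMod 2, g x * chi r x :=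
      Finset.sum_subset (Finset.subset_univ _) (fun x _ hx => by
        rw [hsupp x (by simpa using hx), zero_mul])
    have h2 : ∑ x ∈ Finset.univ.image a, g x * chi r x = ∑ i, g (a i) * chi r (a i) :=
      Finset.sum_image (fun i _ j _ h => hinj h)
    show (∑ x : Fin n → ZMod 2, g x * chi r x) / N = _
    rw [← h1, h2]
  set S : ℝ := ∑ i, (g (a i))^2 with hSdef
  have hSm : (m : ℝ) ≤ S := by
    have : ∀ i ∈ Finset.univ, (1:ℝ) ≤ (g (a i))^2 := fun i _ => by
      have h1 := hbig i
      nlinarith [sq_abs (g (a i))]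
    calc (m : ℝ) = ∑ _i : Fin m, (1:ℝ) := by simp
    _ ≤ S := Finset.sum_le_sum this
  have hS1 : (1:ℝ) ≤ S := le_trans (by exact_mod_cast hm : (1:ℝ) ≤ (m:ℝ)) hSm
  -- second moment
  have hS2 : ∑ r : Fin n → ZMod 2, (ft g r)^2 = S / N := by
    have e1 : ∀ r, (ft g r)^2 = (∑ i, g (a i) * chi r (a i))^2 / N^2 := fun r => by
      rw [hft, div_pow]
    rw [Finset.sum_congr rfl fun r _ => e1 r, ← Finset.sum_div,
      key_expand (fun i => g (a i)) (fun i => a i)]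
    have e2 : ∀ i j : Fin m, (a i + a j = 0) ↔ (i = j) := fun i j =>
      pi_add_eq_zero.trans hinj.eq_iff
    have e3 : ∀ i : Fin m, (∑ j, (g (a i) * g (a j)) *
        (if a i + a j = 0 then N else 0)) = (g (a i))^2 * N := by
      intro i
      rw [Finset.sum_congr rfl fun j _ => by
        rw [if_congr (e2 i j) rfl rfl, mul_ite, mul_zero]]
      rw [Finset.sum_ite_eq]
      simp [sq]
    rw [Finset.sum_congr rfl fun i _ => e3 i, ← Finset.sum_mul, ← hSdef, sq,
      mul_div_mul_right _ _ (ne_of_gt hNpos)]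
  -- fourth moment
  set C : Fin m × Fin m → ℝ := fun p => g (a p.1) * g (a p.2) with hCdef
  set w : Fin m × Fin m → (Fin n → ZMod 2) := fun p => a p.1 + a p.2 with hwdef
  have hsq : ∀ r, (∑ i, g (a i) * chi r (a i))^2 = ∑ p : Fin m × Fin m, C p * chi r (w p) := by
    intro r
    rw [sq_sum_chi]
    exact (Fintype.sum_prod_type (f := fun p : Fin m × Fin m => C p * chi r (w p))).symm
  have h4exp : ∑ r : Fin n → ZMod 2, (ft g r)^4
      = (∑ p : Fin m × Fin m, ∑ q : Fin m × Fin m,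
          (C p * C q) * (if w p + w q = 0 then N else 0)) / N^4 := by
    have e1 : ∀ r, (ft g r)^4 = (∑ p : Fin m × Fin m, C p * chi r (w p))^2 / N^4 := by
      intro r
      rw [hft, div_pow, show (4:ℕ) = 2*2 from rfl, pow_mul, hsq r]
    rw [Finset.sum_congr rfl fun r _ => e1 r, ← Finset.sum_div, key_expand C w]
  set D : ℝ := ∑ p : Fin m × Fin m, ∑ q : Fin m × Fin m,
      (if w p + w q = 0 then C p * C q else 0) with hDdef
  have hnum : (∑ p : Fin m × Fin m, ∑ q : Fin m × Fin m,
      (C p * C q) * (if w p + w q = 0 then N else 0)) = N * D := by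
    rw [hDdef, Finset.mul_sum]
    refine Finset.sum_congr rfl fun p _ => ?_
    rw [Finset.mul_sum]
    refine Finset.sum_congr rfl fun q _ => ?_
    split_ifs with h
    · ring
    · simp
  -- the S^2 identity
  have hSsq : ∑ p : Fin m × Fin m, (C p)^2 = S^2 := by
    rw [show S^2 = S * S from sq S, hSdef, Finset.sum_mul_sum]
    rw [Fintype.sum_prod_type (f := fun p : Fin m × Fin m => (C p)^2)]
    exact Finset.sum_congr rfl fun i _ => Finset.sum_congr rfl fun j _ => by
      rw [hCdef]; ring
  have hD3 : D ≤ 3 * S^2 := by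
    have hpt : ∀ p q : Fin m × Fin m,
        (if w p + w q = 0 then C p * C q else 0)
          ≤ (if p.1 = p.2 ∧ q.1 = q.2 then |C p * C q| else 0)
            + (if p = q then |C p * C q| else 0)
            + (if p.1 = q.2 ∧ p.2 = q.1 then |C p * C q| else 0) := by
      intro p q
      have habs : (if w p + w q = 0 then C p * C q else 0)
          ≤ (if w p + w q = 0 then |C p * C q| else 0) := by
        split_ifs
        · exact le_abs_self _
        · exact le_refl 0
      refine le_trans habs (ite_le_three _ (abs_nonneg _) ?_)
      intro hzero
      have h0 : a p.1 + a p.2 + a q.1 + a q.2 = 0 := by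
        rw [hwdef] at hzero
        rw [show a p.1 + a p.2 + a q.1 + a q.2
          = (a p.1 + a p.2) + (a q.1 + a q.2) by ring]
        exact hzero
      rcases pairing hind h0 with h | h | h
      · exact Or.inl h
      · exact Or.inr (Or.inl (Prod.ext h.1 h.2))
      · exact Or.inr (Or.inr h)
    have step : D ≤ ∑ p : Fin m × Fin m, ∑ q : Fin m × Fin m,
        ((if p.1 = p.2 ∧ q.1 = q.2 then |C p * C q| else 0)
          + (if p = q then |C p * C q| else 0)
          + (if p.1 = q.2 ∧ p.2 = q.1 then |C p * C q| else 0)) := by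
      rw [hDdef]
      exact Finset.sum_le_sum fun p _ => Finset.sum_le_sum fun q _ => hpt p q
    simp only [Finset.sum_add_distrib] at step
    have T12 : ∑ p : Fin m × Fin m, ∑ q : Fin m × Fin m,
        (if p.1 = p.2 ∧ q.1 = q.2 then |C p * C q| else 0) = S^2 := by
      have hfac : ∀ p q : Fin m × Fin m,
          (if p.1 = p.2 ∧ q.1 = q.2 then |C p * C q| else 0)
            = (if p.1 = p.2 then |C p| else 0) * (if q.1 = q.2 then |C q| else 0) := by
        intro p q
        by_cases hA : p.1 = p.2 <;> by_cases hB : q.1 = q.2 <;> simp [hA, hB, abs_mul]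
      rw [Finset.sum_congr rfl fun p _ => Finset.sum_congr rfl fun q _ => hfac p q]
      rw [← Finset.sum_mul_sum]
      have hdiag : ∑ p : Fin m × Fin m, (if p.1 = p.2 then |C p| else 0) = S := by
        rw [Fintype.sum_prod_type
          (f := fun p : Fin m × Fin m => if p.1 = p.2 then |C p| else 0)]
        rw [hSdef]
        refine Finset.sum_congr rfl fun i _ => ?_
        rw [Finset.sum_ite_eq]
        simp [hCdef, abs_mul, abs_mul_self, sq]
      rw [hdiag, sq]
    have T13 : ∑ p : Fin m × Fin m, ∑ q : Fin m × Fin m,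
        (if p = q then |C p * C q| else 0) = S^2 := by
      rw [← hSsq]
      refine Finset.sum_congr rfl fun p _ => ?_
      rw [Finset.sum_ite_eq]
      simp [abs_mul, abs_mul_self, sq]
    have T14 : ∑ p : Fin m × Fin m, ∑ q : Fin m × Fin m,
        (if p.1 = q.2 ∧ p.2 = q.1 then |C p * C q| else 0) = S^2 := by
      rw [← hSsq]
      refine Finset.sum_congr rfl fun p _ => ?_
      have hcond : ∀ q : Fin m × Fin m, (p.1 = q.2 ∧ p.2 = q.1) ↔ ((p.2, p.1) = q) := by
        intro q
        rw [Prod.ext_iff]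
        constructor
        · rintro ⟨h1, h2⟩; exact ⟨h2, h1⟩
        · rintro ⟨h1, h2⟩; exact ⟨h2, h1⟩
      rw [Finset.sum_congr rfl fun q _ => if_congr (hcond q) rfl rfl, Finset.sum_ite_eq]
      have : C (p.2, p.1) = C p := by rw [hCdef]; ring
      simp [this, abs_mul, abs_mul_self, sq]
    linarith
  have hS4 : ∑ r : Fin n → ZMod 2, (ft g r)^4 ≤ 3 * S^2 / N^3 := by
    rw [h4exp, hnum, show N^4 = N * N^3 by ring, mul_div_mul_left _ _ (ne_of_gt hNpos)]
    gcongr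
  -- Cauchy-Schwarz chain
  set A : ℝ := aNorm g with hAdef
  set S2 : ℝ := ∑ r : Fin n → ZMod 2, (ft g r)^2 with hS2def
  set S3 : ℝ := ∑ r : Fin n → ZMod 2, |ft g r|^3 with hS3def
  set S4 : ℝ := ∑ r : Fin n → ZMod 2, (ft g r)^4 with hS4def
  have cs1 : S2^2 ≤ A * S3 := by
    have h := Finset.sum_mul_sq_le_sq_mul_sq Finset.univ
      (fun r : Fin n → ZMod 2 => Real.sqrt |ft g r|)
      (fun r : Fin n → ZMod 2 => Real.sqrt |ft g r| * |ft g r|)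
    have e1 : ∀ r : Fin n → ZMod 2,
        Real.sqrt |ft g r| * (Real.sqrt |ft g r| * |ft g r|) = (ft g r)^2 := by
      intro r
      rw [← mul_assoc, Real.mul_self_sqrt (abs_nonneg _), ← sq, sq_abs]
    have e2 : ∀ r : Fin n → ZMod 2, (Real.sqrt |ft g r|)^2 = |ft g r| :=
      fun r => Real.sq_sqrt (abs_nonneg _)
    have e3 : ∀ r : Fin n → ZMod 2, (Real.sqrt |ft g r| * |ft g r|)^2 = |ft g r|^3 := by
      intro r
      rw [mul_pow, Real.sq_sqrt (abs_nonneg _)]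
      ring
    calc S2^2 = (∑ r : Fin n → ZMod 2,
          Real.sqrt |ft g r| * (Real.sqrt |ft g r| * |ft g r|))^2 := by
          rw [hS2def, Finset.sum_congr rfl fun r _ => (e1 r)]
      _ ≤ (∑ r : Fin n → ZMod 2, (Real.sqrt |ft g r|)^2)
            * (∑ r : Fin n → ZMod 2, (Real.sqrt |ft g r| * |ft g r|)^2) := h
      _ = A * S3 := by
          rw [Finset.sum_congr rfl fun r _ => e2 r, Finset.sum_congr rfl fun r _ => e3 r]
          rfl
  have cs2 : S3^2 ≤ S2 * S4 := by
    have h := Finset.sum_mul_sq_le_sq_mul_sq Finset.univ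
      (fun r : Fin n → ZMod 2 => |ft g r|) (fun r : Fin n → ZMod 2 => (ft g r)^2)
    have e1 : ∀ r : Fin n → ZMod 2, |ft g r| * (ft g r)^2 = |ft g r|^3 := by
      intro r
      rw [← sq_abs]
      ring
    have e2 : ∀ r : Fin n → ZMod 2, (|ft g r|)^2 = (ft g r)^2 := fun r => sq_abs _
    have e3 : ∀ r : Fin n → ZMod 2, ((ft g r)^2)^2 = (ft g r)^4 := fun r => by ring
    calc S3^2 = (∑ r : Fin n → ZMod 2, |ft g r| * (ft g r)^2)^2 := by
          rw [hS3def, Finset.sum_congr rfl fun r _ => (e1 r)]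
      _ ≤ (∑ r : Fin n → ZMod 2, (|ft g r|)^2) * (∑ r : Fin n → ZMod 2, ((ft g r)^2)^2) := h
      _ = S2 * S4 := by
          rw [Finset.sum_congr rfl fun r _ => e2 r, Finset.sum_congr rfl fun r _ => e3 r]
  have hS2pos : 0 < S2 := by
    rw [hS2]
    exact div_pos (by linarith) hNpos
  have hS3nn : 0 ≤ S3 := Finset.sum_nonneg fun r _ => by positivity
  have hS4nn : 0 ≤ S4 := Finset.sum_nonneg fun r _ => by positivity
  have key : S2^3 ≤ A^2 * S4 := by
    have h1 : (S2^2)^2 ≤ (A*S3)^2 := pow_le_pow_left₀ (sq_nonneg _) cs1 2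
    have h2 : A^2*S3^2 ≤ A^2*(S2*S4) := mul_le_mul_of_nonneg_left cs2 (sq_nonneg A)
    have h4 : S2^3 * S2 ≤ (A^2*S4) * S2 := by
      calc S2^3*S2 = (S2^2)^2 := by ring
        _ ≤ (A*S3)^2 := h1
        _ = A^2*S3^2 := by ring
        _ ≤ A^2*(S2*S4) := h2
        _ = (A^2*S4)*S2 := by ring
    exact le_of_mul_le_mul_right h4 hS2pos
  have hfin : (m:ℝ)/3 ≤ A^2 := by
    have hkey2 : S^3/N^3 ≤ (A^2 * (3*S^2))/N^3 := by
      calc S^3/N^3 = (S/N)^3 := by rw [div_pow]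
        _ = S2^3 := by rw [hS2]
        _ ≤ A^2 * S4 := key
        _ ≤ A^2 * (3*S^2/N^3) := mul_le_mul_of_nonneg_left hS4 (sq_nonneg _)
        _ = (A^2 * (3*S^2))/N^3 := by ring
    have hN3 : (0:ℝ) < N^3 := pow_pos hNpos 3
    have h5 : S^3 ≤ A^2 * (3*S^2) := by
      have := mul_le_mul_of_nonneg_right hkey2 hN3.le
      rw [div_mul_cancel₀ _ (ne_of_gt hN3), div_mul_cancel₀ _ (ne_of_gt hN3)] at this
      exact this
    have hS2p : (0:ℝ) < S^2 := by positivity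
    have h6' : S * S^2 ≤ (3*A^2) * S^2 := by
      calc S*S^2 = S^3 := by ring
        _ ≤ A^2*(3*S^2) := h5
        _ = (3*A^2)*S^2 := by ring
    have h6 : S ≤ 3*A^2 := le_of_mul_le_mul_right h6' hS2p
    linarith
  have hfin2 := Real.sqrt_le_sqrt hfin
  rwa [Real.sqrt_sq hA0] at hfin2
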